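/- Let n ≥ 3 and let T be a nontransitive tournament on {1,…,n}. Let R_T be the collection of all nonempty subsets R of {1,…,n} with the property that for every r ∈ R and every m ∉ R one has (r,m) ∈ T (i.e. every element of R beats every element outside R). Then |R_T| ≤ n − 2. -/

import Mathlib

/-- Lemma 3.4: a nontransitive tournament `T` on `{1,…,n}` (here modelled on `Fin n`)
has at most `n - 2` "dominant" nonempty vertex subsets `R` (every element of `R` beats
every element outside `R`). -/
theorem stmt10 (n : ℕ) (hn : 3 ≤ n) (T : Finset (Fin n × Fin n))
    (hTirr : ∀ i : Fin n, (i, i) ∉ T)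
    (hT : ∀ i j : Fin n, i ≠ j → ((i, j) ∈ T ↔ (j, i) ∉ T))
    (hnt : ∃ i j k : Fin n, (i, j) ∈ T ∧ (j, k) ∈ T ∧ (k, i) ∈ T) :
    (Finset.univ.filter (fun R : Finset (Fin n) =>
        R.Nonempty ∧ ∀ r ∈ R, ∀ m ∉ R, (r, m) ∈ T)).card ≤ n - 2 := by
  obtain ⟨i, j, k, hij', hjk', hki'⟩ := hnt
  have hij : i ≠ j := by rintro rfl; exact hTirr _ hij'
  have hjk : j ≠ k := by rintro rfl; exact hTirr _ hjk'
  have hki : k ≠ i := by rintro rfl; exact hTirr _ hki'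
  set D := Finset.univ.filter (fun R : Finset (Fin n) =>
        R.Nonempty ∧ ∀ r ∈ R, ∀ m ∉ R, (r, m) ∈ T) with hD
  have dom : ∀ R ∈ D, R.Nonempty ∧ ∀ r ∈ R, ∀ m ∉ R, (r, m) ∈ T := by
    intro R hR; simpa [hD] using hR
  -- dominant sets form a chain
  have chain : ∀ R ∈ D, ∀ S ∈ D, R ⊆ S ∨ S ⊆ R := by
    intro R hR S hS
    by_contra h
    push_neg at h
    obtain ⟨r, hrR, hrS⟩ := Finset.not_subset.mp h.1
    obtain ⟨s, hsS, hsR⟩ := Finset.not_subset.mp h.2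
    have hrs : r ≠ s := fun e => hrS (e ▸ hsS)
    have h1 : (r, s) ∈ T := (dom R hR).2 r hrR s hsR
    have h2 : (s, r) ∈ T := (dom S hS).2 s hsS r hrS
    exact ((hT r s hrs).mp h1) h2
  -- if b beats a and a ∈ R dominant, then b ∈ R
  have step : ∀ R ∈ D, ∀ a b : Fin n, (b, a) ∈ T → a ∈ R → b ∈ R := by
    intro R hR a b hba haR
    by_contra hbR
    have hab : a ≠ b := by rintro rfl; exact hTirr _ hba
    have h1 : (a, b) ∈ T := (dom R hR).2 a haR b hbR
    exact ((hT a b hab).mp h1) hba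
  -- the 3-cycle is all in or all out
  have cyc : ∀ R ∈ D, (i ∈ R ∧ j ∈ R ∧ k ∈ R) ∨ (i ∉ R ∧ j ∉ R ∧ k ∉ R) := by
    intro R hR
    have h1 : i ∈ R → k ∈ R := step R hR i k hki'
    have h2 : k ∈ R → j ∈ R := step R hR k j hjk'
    have h3 : j ∈ R → i ∈ R := step R hR j i hij'
    by_cases hi : i ∈ R
    · exact Or.inl ⟨hi, h2 (h1 hi), h1 hi⟩
    · exact Or.inr ⟨hi, fun hj => hi (h3 hj), fun hk => hi (h3 (h2 hk))⟩
  set C : Finset (Fin n) := {i, j, k} with hCdef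
  have hC3 : C.card = 3 := by
    rw [hCdef]
    rw [Finset.card_insert_of_notMem (by simp [hij, hki.symm]),
        Finset.card_insert_of_notMem (by simp [hjk]), Finset.card_singleton]
  have hcontain : ∀ R ∈ D, i ∈ R → 3 ≤ R.card := by
    intro R hR hi
    rcases cyc R hR with ⟨h1, h2, h3⟩ | ⟨h1, _, _⟩
    · have : C ⊆ R := by
        intro x hx
        simp only [hCdef, Finset.mem_insert, Finset.mem_singleton] at hx
        rcases hx with rfl | rfl | rfl <;> assumption
      calc 3 = C.card := hC3.symm
        _ ≤ R.card := Finset.card_le_card this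
    · exact absurd hi h1
  have hcardn : ∀ R : Finset (Fin n), R.card ≤ n := by
    intro R
    simpa using Finset.card_le_univ R
  have havoid : ∀ R ∈ D, i ∉ R → R.card ≤ n - 3 := by
    intro R hR hi
    rcases cyc R hR with ⟨h1, _, _⟩ | ⟨h1, h2, h3⟩
    · exact absurd h1 hi
    · have hsub : R ⊆ Finset.univ \ C := by
        intro x hx
        simp only [Finset.mem_sdiff, Finset.mem_univ, true_and, hCdef,
          Finset.mem_insert, Finset.mem_singleton]
        rintro (rfl | rfl | rfl) <;> [exact h1 hx; exact h2 hx; exact h3 hx]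
      have := Finset.card_le_card hsub
      rwa [Finset.card_univ_diff, hC3, Fintype.card_fin] at this
  have hcross : ∀ R ∈ D, ∀ S ∈ D, i ∉ R → i ∈ S → R.card + 3 ≤ S.card := by
    intro R hR S hS hiR hiS
    have hsub : R ⊆ S := by
      rcases chain R hR S hS with h | h
      · exact h
      · exact absurd (h hiS) hiR
    rcases cyc R hR with ⟨h1, _, _⟩ | ⟨h1, h2, h3⟩
    · exact absurd h1 hiR
    rcases cyc S hS with ⟨g1, g2, g3⟩ | ⟨g1, _, _⟩
    · have hdisj : Disjoint R C := by
        rw [Finset.disjoint_right]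
        intro x hx
        simp only [hCdef, Finset.mem_insert, Finset.mem_singleton] at hx
        rcases hx with rfl | rfl | rfl <;> assumption
      have hsub2 : R ∪ C ⊆ S := by
        apply Finset.union_subset hsub
        intro x hx
        simp only [hCdef, Finset.mem_insert, Finset.mem_singleton] at hx
        rcases hx with rfl | rfl | rfl <;> assumption
      have := Finset.card_le_card hsub2
      rwa [Finset.card_union_of_disjoint hdisj, hC3] at this
    · exact absurd hiS g1
  -- the injection
  have key : D.card ≤ (Finset.Icc 1 (n - 2)).card := by
    apply Finset.card_le_card_of_injOn
      (fun R => if i ∈ R then R.card - 2 else R.card)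
    · intro R hR
      have h1 : 1 ≤ R.card := Finset.card_pos.mpr (dom R hR).1
      have h2 : R.card ≤ n := hcardn R
      by_cases hi : i ∈ R
      · have := hcontain R hR hi
        simp only [hi, if_true, Finset.mem_coe, Finset.mem_Icc]
        omega
      · have := havoid R hR hi
        simp only [hi, if_false, Finset.mem_coe, Finset.mem_Icc]
        omega
    · intro R hR S hS hfe
      simp only at hfe
      have eqcard : R.card = S.card := by
        by_cases hiR : i ∈ R <;> by_cases hiS : i ∈ S
        · have := hcontain R hR hiR
          have := hcontain S hS hiS
          simp only [hiR, hiS, if_true] at hfe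
          omega
        · have := hcross S hS R hR hiS hiR
          simp only [hiR, hiS, if_true, if_false] at hfe
          omega
        · have := hcross R hR S hS hiR hiS
          simp only [hiR, hiS, if_true, if_false] at hfe
          omega
        · simpa [hiR, hiS] using hfe
      rcases chain R hR S hS with h | h
      · exact Finset.eq_of_subset_of_card_le h (le_of_eq eqcard.symm)
      · exact (Finset.eq_of_subset_of_card_le h (le_of_eq eqcard)).symm
  rw [Nat.card_Icc] at key
  omega
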